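/- Let M, G ⊆ ℕ₀^d be nonempty misère vector subtraction games, and suppose both limit games M^∞ and G^∞ under the misère ★-operator exist. Then M^∞ = G^∞ if and only if min(M) = min(G) (the sets of minimal elements coincide). -/

import Mathlib

/-- `x` is a terminal position of the subtraction game with move set `M`:
no move `m ∈ M` satisfies `m ≤ x`. -/
def Terminal {α : Type*} [PartialOrder α] [Sub α] (M : Set α) (x : α) : Prop :=
  ∀ m ∈ M, ¬ m ≤ x

/-- The set of terminal positions `T_M`. -/
def Tset {α : Type*} [PartialOrder α] [Sub α] (M : Set α) : Set α :=
  {x | Terminal M x}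

/-- Misère-play P-positions of a vector subtraction game, by well-founded recursion:
`x` is a P-position iff it has at least one option, and every option `x - m` is an
N-position, i.e. is terminal or has an option `x - m - m'` that is a P-position.
(The guard `x - m - m' < x` is automatic when `0 ∉ M`; when `0 ∈ M` the game is drawn
everywhere and this definition correctly yields no P-positions.) -/
def IsP {α : Type*} [PartialOrder α] [Sub α] [WellFoundedLT α] (M : Set α) : α → Prop :=
  (wellFounded_lt (α := α)).fix fun x rec =>
    (∃ m ∈ M, m ≤ x) ∧ ∀ m ∈ M, m ≤ x →
      (Terminal M (x - m) ∨
        ∃ m' ∈ M, m' ≤ x - m ∧ ∃ h : x - m - m' < x, rec (x - m - m') h)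

/-- The set of misère P-positions (this is also the `★`-operator `M ↦ M★`). -/
def Pset {α : Type*} [PartialOrder α] [Sub α] [WellFoundedLT α] (M : Set α) : Set α :=
  {x | IsP M x}

/-- `x` is a misère N-position: terminal, or has an option that is a P-position. -/
def IsN {α : Type*} [PartialOrder α] [Sub α] [WellFoundedLT α] (M : Set α) (x : α) : Prop :=
  Terminal M x ∨ ∃ m ∈ M, m ≤ x ∧ IsP M (x - m)

/-- The set of misère N-positions. -/
def Nset {α : Type*} [PartialOrder α] [Sub α] [WellFoundedLT α] (M : Set α) : Set α :=
  {x | IsN M x}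

/-- The set of minimal elements of `M`. -/
def minSet {α : Type*} [PartialOrder α] (M : Set α) : Set α :=
  {m ∈ M | ∀ m' ∈ M, m' ≤ m → m' = m}

/-- Pointwise convergence of the iterates of the `★`-operator to the set `L`. -/
def LimitsTo {α : Type*} [PartialOrder α] [Sub α] [WellFoundedLT α] (M L : Set α) : Prop :=
  ∀ x : α, ∃ N : ℕ, ∀ i ≥ N, (x ∈ Pset^[i] M ↔ x ∈ L)

/-- The one-dimensional reflexive games `M_k` (with `M_0 = ∅`). -/
def Mk (k : ℕ) : Set ℕ :=
  {n | 1 ≤ k ∧ ∃ i j : ℕ, k ≤ j ∧ j ≤ 2 * k - 1 ∧ n = i * (3 * k - 1) + j}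

section Aux
set_option linter.unusedVariables false

lemma isP_iff {α : Type*} [PartialOrder α] [Sub α] [WellFoundedLT α] (M : Set α) (x : α) :
    IsP M x ↔ (∃ m ∈ M, m ≤ x) ∧ ∀ m ∈ M, m ≤ x →
      (Terminal M (x - m) ∨
        ∃ m' ∈ M, m' ≤ x - m ∧ ∃ h : x - m - m' < x, IsP M (x - m - m')) := by
  unfold IsP
  rw [WellFounded.fix_eq]

variable {d : ℕ}

lemma vsub_le (x m : Fin d → ℕ) : x - m ≤ x := tsub_le_self

lemma vsub_lt {x m : Fin d → ℕ} (h : m ≤ x) (h0 : m ≠ 0) : x - m < x := by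
  refine lt_of_le_of_ne tsub_le_self (fun he => h0 ?_)
  funext i
  have h1 : x i - m i = x i := congrFun he i
  have h2 : m i ≤ x i := h i
  show m i = 0
  omega

lemma vle_zero {y : Fin d → ℕ} (h : y ≤ 0) : y = 0 := nonpos_iff_eq_zero.mp h

/-- every element of S above nothing... : every s ∈ S with s ≤ x gives a minimal a ≤ x -/
lemma exists_min_le {S : Set (Fin d → ℕ)} {s x : Fin d → ℕ} (hs : s ∈ S) (hsx : s ≤ x) :
    ∃ a ∈ minSet S, a ≤ x := by
  obtain ⟨a, ⟨haS, hax⟩, hmin⟩ :=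
    (wellFounded_lt (α := Fin d → ℕ)).has_min {a | a ∈ S ∧ a ≤ x} ⟨s, hs, hsx⟩
  refine ⟨a, ⟨haS, fun m' hm' hle => ?_⟩, hax⟩
  by_contra hne
  exact hmin m' ⟨hm', le_trans hle hax⟩ (lt_of_le_of_ne hle hne)

lemma not_isP_zero (S : Set (Fin d → ℕ)) : ¬ IsP S (0 : Fin d → ℕ) := by
  rw [isP_iff]
  rintro ⟨⟨m, hm, hm0⟩, hall⟩
  have hm0' : m = 0 := vle_zero hm0
  subst hm0'
  rcases hall 0 hm (le_refl _) with ht | ⟨m', hm', hle, hlt, _⟩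
  · exact ht 0 hm (by simp)
  · exact (ne_of_lt hlt) (vle_zero (le_of_lt hlt))

lemma not_zero_mem_pset (S : Set (Fin d → ℕ)) : (0 : Fin d → ℕ) ∉ Pset S :=
  not_isP_zero S

lemma pset_mem_exists {S : Set (Fin d → ℕ)} {x : Fin d → ℕ} (hx : x ∈ Pset S) :
    ∃ a ∈ minSet S, a ≤ x := by
  obtain ⟨⟨m, hm, hmx⟩, -⟩ := (isP_iff S x).mp hx
  exact exists_min_le hm hmx

/-- sandwich lemma: if minSet M ⊆ L and every element of L is above an element of
minSet M, then minSet L = minSet M. -/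
lemma minSet_sandwich {M L : Set (Fin d → ℕ)} (h1 : minSet M ⊆ L)
    (h2 : ∀ x ∈ L, ∃ a ∈ minSet M, a ≤ x) : minSet L = minSet M := by
  ext p
  constructor
  · rintro ⟨hpL, hpmin⟩
    obtain ⟨a, haM, hap⟩ := h2 p hpL
    have : a = p := hpmin a (h1 haM) hap
    exact this ▸ haM
  · rintro ⟨hpM, hpmin⟩
    refine ⟨h1 ⟨hpM, hpmin⟩, fun q hqL hqp => ?_⟩
    obtain ⟨a', ha'min, ha'q⟩ := h2 q hqL
    have he : a' = p := hpmin a' ha'min.1 (le_trans ha'q hqp)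
    exact le_antisymm hqp (he ▸ ha'q)

lemma minSet_mem_pset {M : Set (Fin d → ℕ)} (h0 : (0 : Fin d → ℕ) ∉ M)
    {a : Fin d → ℕ} (ha : a ∈ minSet M) : a ∈ Pset M := by
  obtain ⟨haM, hamin⟩ := ha
  show IsP M a
  rw [isP_iff]
  refine ⟨⟨a, haM, le_refl a⟩, fun m hm hma => ?_⟩
  have : m = a := hamin m hm hma
  subst this
  left
  intro s hs hsle
  rw [tsub_self] at hsle
  exact h0 (vle_zero hsle ▸ hs)

lemma minSet_pset {M : Set (Fin d → ℕ)} (h0 : (0 : Fin d → ℕ) ∉ M) :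
    minSet (Pset M) = minSet M :=
  minSet_sandwich (fun a ha => minSet_mem_pset h0 ha) (fun x hx => pset_mem_exists hx)

end Aux

section Aux2
set_option linter.unusedVariables false
variable {d : ℕ}

/-- IsP at x only depends on the move set below x. -/
lemma isP_congr : ∀ x : Fin d → ℕ, ∀ S S' : Set (Fin d → ℕ),
    (∀ y, y ≤ x → (y ∈ S ↔ y ∈ S')) → IsP S x → IsP S' x := by
  intro x
  induction x using (wellFounded_lt (α := Fin d → ℕ)).induction with
  | _ x IH =>
    intro S S' hagree hP
    rw [isP_iff] at hP ⊢
    obtain ⟨⟨m, hm, hmx⟩, hall⟩ := hP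
    refine ⟨⟨m, (hagree m hmx).mp hm, hmx⟩, fun m hmS' hmx => ?_⟩
    have hmS : m ∈ S := (hagree m hmx).mpr hmS'
    rcases hall m hmS hmx with ht | ⟨m', hm', hle, hlt, hP'⟩
    · left
      intro s hsS' hsle
      exact ht s ((hagree s (le_trans hsle (vsub_le x m))).mpr hsS') hsle
    · right
      have hm'x : m' ≤ x := le_trans hle (vsub_le x m)
      refine ⟨m', (hagree m' hm'x).mp hm', hle, hlt, ?_⟩
      exact IH _ hlt S S'
        (fun y hy => hagree y (le_trans hy (le_trans (vsub_le _ _) (vsub_le x m)))) hP'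

lemma isP_congr_iff {x : Fin d → ℕ} {S S' : Set (Fin d → ℕ)}
    (h : ∀ y, y ≤ x → (y ∈ S ↔ y ∈ S')) : IsP S x ↔ IsP S' x :=
  ⟨isP_congr x S S' h, isP_congr x S' S (fun y hy => (h y hy).symm)⟩

/-- the limit of the Pset iteration is a fixed point of Pset. -/
lemma limit_fixed {M L : Set (Fin d → ℕ)} (hL : LimitsTo M L) : Pset L = L := by
  ext x
  classical
  choose f hf using hL
  have hfin : (Set.Iic x).Finite := Set.finite_Iic x
  set N := hfin.toFinset.sup f with hN
  have hstab : ∀ y, y ≤ x → (y ∈ Pset^[N] M ↔ y ∈ L) := by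
    intro y hy
    exact hf y N (Finset.le_sup (hfin.mem_toFinset.mpr hy))
  have h1 : x ∈ Pset L ↔ x ∈ Pset (Pset^[N] M) :=
    isP_congr_iff (fun y hy => ((hstab y hy).symm))
  have h2 : Pset (Pset^[N] M) = Pset^[N+1] M := (Function.iterate_succ_apply' Pset N M).symm
  have h3 : x ∈ Pset^[N+1] M ↔ x ∈ L := hf x (N+1) (le_trans (Finset.le_sup
    (hfin.mem_toFinset.mpr (le_refl x))) (Nat.le_succ N))
  rw [h1, h2, h3]

lemma pset_empty : Pset (∅ : Set (Fin d → ℕ)) = ∅ := by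
  ext x
  simp only [Set.mem_empty_iff_false, iff_false]
  intro hx
  obtain ⟨⟨m, hm, -⟩, -⟩ := (isP_iff _ x).mp hx
  exact hm

lemma pset_zero_mem {M : Set (Fin d → ℕ)} (h0 : (0 : Fin d → ℕ) ∈ M) : Pset M = ∅ := by
  by_contra hne
  obtain ⟨x, hx, hmin⟩ := (wellFounded_lt (α := Fin d → ℕ)).has_min (Pset M)
    (Set.nonempty_iff_ne_empty.mpr hne)
  obtain ⟨⟨m, hm, hmx⟩, hall⟩ := (isP_iff M x).mp hx
  rcases hall 0 h0 zero_le with ht | ⟨m', hm', hle, hlt, hP'⟩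
  · exact ht m hm (le_trans hmx (le_of_eq (tsub_zero x).symm))
  · exact hmin _ hP' hlt

lemma limit_of_zero_mem {M L : Set (Fin d → ℕ)} (hL : LimitsTo M L)
    (h0 : (0 : Fin d → ℕ) ∈ M) : L = ∅ := by
  have hiter : ∀ j : ℕ, Pset^[j+1] M = ∅ := by
    intro j
    induction j with
    | zero => simpa using pset_zero_mem h0
    | succ k ih =>
      rw [Function.iterate_succ_apply' Pset (k+1) M, ih, pset_empty]
  ext x
  simp only [Set.mem_empty_iff_false, iff_false]
  intro hx
  obtain ⟨N, hN⟩ := hL x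
  have := (hN (N+1) (Nat.le_succ N)).mpr hx
  rw [hiter N] at this
  exact this

end Aux2

section Aux3
set_option linter.unusedVariables false
variable {d : ℕ}

lemma minSet_nonempty {M : Set (Fin d → ℕ)} (hM : M.Nonempty) : (minSet M).Nonempty := by
  obtain ⟨s, hs⟩ := hM
  obtain ⟨a, ha, -⟩ := exists_min_le hs (le_refl s)
  exact ⟨a, ha⟩

lemma iterate_props {M : Set (Fin d → ℕ)} (h0 : (0 : Fin d → ℕ) ∉ M) (hM : M.Nonempty) :
    ∀ i : ℕ, (Pset^[i] M).Nonempty ∧ (0 : Fin d → ℕ) ∉ Pset^[i] M ∧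
      minSet (Pset^[i] M) = minSet M := by
  intro i
  induction i with
  | zero => exact ⟨hM, h0, rfl⟩
  | succ k ih =>
    obtain ⟨hne, h0', hmin⟩ := ih
    rw [Function.iterate_succ_apply' Pset k M]
    refine ⟨?_, not_zero_mem_pset _, ?_⟩
    · obtain ⟨a, ha⟩ := minSet_nonempty hne
      exact ⟨a, minSet_mem_pset h0' ha⟩
    · rw [minSet_pset h0', hmin]

lemma limit_minSet {M L : Set (Fin d → ℕ)} (hL : LimitsTo M L)
    (h0 : (0 : Fin d → ℕ) ∉ M) (hM : M.Nonempty) : minSet L = minSet M := by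
  refine minSet_sandwich ?_ ?_
  · intro a ha
    obtain ⟨N, hN⟩ := hL a
    refine (hN N (le_refl N)).mp ?_
    have := (iterate_props h0 hM N).2.2
    rw [← this] at ha
    exact ha.1
  · intro x hx
    obtain ⟨N, hN⟩ := hL x
    have hx' : x ∈ Pset^[N+1] M := (hN (N+1) (Nat.le_succ N)).mpr hx
    rw [Function.iterate_succ_apply' Pset N M] at hx'
    obtain ⟨a, ha, hax⟩ := pset_mem_exists hx'
    rw [(iterate_props h0 hM N).2.2] at ha
    exact ⟨a, ha, hax⟩

lemma zero_not_mem_fixed {K : Set (Fin d → ℕ)} (hK : Pset K = K) : (0 : Fin d → ℕ) ∉ K :=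
  fun h => not_zero_mem_pset K (hK.symm ▸ h)

/-- one-sided transfer for the uniqueness of fixed points. -/
lemma fixed_unique_aux {L K : Set (Fin d → ℕ)} (hL : Pset L = L) (hK : Pset K = K)
    (hmin : minSet L = minSet K) (x : Fin d → ℕ)
    (IH : ∀ y, y < x → (y ∈ L ↔ y ∈ K)) (hx : x ∈ L) : x ∈ K := by
  have h0K : (0 : Fin d → ℕ) ∉ K := zero_not_mem_fixed hK
  rw [← hK]
  show IsP K x
  rw [isP_iff]
  have hxP : IsP L x := by rw [← hL] at hx; exact hx
  obtain ⟨⟨m0, hm0, hm0x⟩, hall⟩ := (isP_iff L x).mp hxP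
  constructor
  · obtain ⟨a, haL, hax⟩ := exists_min_le hm0 hm0x
    exact ⟨a, (hmin ▸ haL : a ∈ minSet K).1, hax⟩
  · intro m hmK hmx
    by_cases hme : m = x
    · subst hme
      left
      intro s hsK hsle
      rw [tsub_self] at hsle
      exact h0K (vle_zero hsle ▸ hsK)
    · have hmlt : m < x := lt_of_le_of_ne hmx hme
      have hmL : m ∈ L := (IH m hmlt).mpr hmK
      have hm0 : m ≠ 0 := fun h => h0K (h ▸ hmK)
      have hsub : x - m < x := vsub_lt hmx hm0
      rcases hall m hmL hmx with ht | ⟨m', hm', hle, hlt, hP'⟩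
      · left
        intro s hsK hsle
        have hslt : s < x := lt_of_le_of_lt hsle hsub
        exact ht s ((IH s hslt).mpr hsK) hsle
      · right
        have hm'lt : m' < x := lt_of_le_of_lt hle hsub
        have hm'K : m' ∈ K := (IH m' hm'lt).mp hm'
        have hyL : x - m - m' ∈ L := hL ▸ hP'
        have hyK : x - m - m' ∈ K := (IH _ hlt).mp hyL
        rw [← hK] at hyK
        exact ⟨m', hm'K, hle, hlt, hyK⟩

lemma fixed_unique {L K : Set (Fin d → ℕ)} (hL : Pset L = L) (hK : Pset K = K)
    (hmin : minSet L = minSet K) : L = K := by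
  ext x
  induction x using (wellFounded_lt (α := Fin d → ℕ)).induction with
  | _ x IH =>
    exact ⟨fixed_unique_aux hL hK hmin x IH,
      fixed_unique_aux hK hL hmin.symm x (fun y hy => (IH y hy).symm)⟩

lemma minSet_of_zero_mem {M : Set (Fin d → ℕ)} (h0 : (0 : Fin d → ℕ) ∈ M) :
    minSet M = {0} := by
  ext a
  constructor
  · rintro ⟨haM, hamin⟩
    exact (hamin 0 h0 zero_le).symm ▸ rfl
  · rintro rfl
    exact ⟨h0, fun m' hm' hle => vle_zero hle⟩

end Aux3

theorem limit_eq_iff_minSet_eq {d : ℕ} (M G : Set (Fin d → ℕ))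
    (hM : M.Nonempty) (hG : G.Nonempty) (LM LG : Set (Fin d → ℕ))
    (hLM : LimitsTo M LM) (hLG : LimitsTo G LG) :
    LM = LG ↔ minSet M = minSet G := by
  have hfixM : Pset LM = LM := limit_fixed hLM
  have hfixG : Pset LG = LG := limit_fixed hLG
  constructor
  · intro heq
    by_cases h0M : (0 : Fin d → ℕ) ∈ M <;> by_cases h0G : (0 : Fin d → ℕ) ∈ G
    · rw [minSet_of_zero_mem h0M, minSet_of_zero_mem h0G]
    · exfalso
      have hLMe : LM = ∅ := limit_of_zero_mem hLM h0M
      have : minSet LG = minSet G := limit_minSet hLG h0G hG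
      obtain ⟨a, ha⟩ := minSet_nonempty hG
      have haLG : a ∈ LG := (this ▸ ha : a ∈ minSet LG).1
      rw [← heq, hLMe] at haLG
      exact haLG
    · exfalso
      have hLGe : LG = ∅ := limit_of_zero_mem hLG h0G
      have : minSet LM = minSet M := limit_minSet hLM h0M hM
      obtain ⟨a, ha⟩ := minSet_nonempty hM
      have haLM : a ∈ LM := (this ▸ ha : a ∈ minSet LM).1
      rw [heq, hLGe] at haLM
      exact haLM
    · rw [← limit_minSet hLM h0M hM, ← limit_minSet hLG h0G hG, heq]
  · intro heq
    by_cases h0M : (0 : Fin d → ℕ) ∈ M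
    · have h0G : (0 : Fin d → ℕ) ∈ G := by
        have : (0 : Fin d → ℕ) ∈ minSet G := heq ▸ (minSet_of_zero_mem h0M ▸ rfl)
        exact this.1
      rw [limit_of_zero_mem hLM h0M, limit_of_zero_mem hLG h0G]
    · have h0G : (0 : Fin d → ℕ) ∉ G := by
        intro h0G
        have : (0 : Fin d → ℕ) ∈ minSet M := heq ▸ (minSet_of_zero_mem h0G ▸ rfl)
        exact h0M this.1
      exact fixed_unique hfixM hfixG (by
        rw [limit_minSet hLM h0M hM, limit_minSet hLG h0G hG, heq])
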